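/- Let d ≥ 2 be an integer and let c be a nonzero integer. Set φ(z) = z^d + c as a map ℚ → ℚ. Then for every α ∈ ℚ there exists a real number L such that h(φ^[k](α))/d^k tends to L as k → ∞, and this L satisfies |L − h(α)| ≤ log|2c| / (d − 1). -/

import Mathlib

open Filter

/-- The absolute logarithmic height of a rational number. -/
noncomputable def ratHeight (q : ℚ) : ℝ := Real.log (max (|q.num| : ℝ) (q.den : ℝ))

lemma ratHeight_step (d : ℕ) (hd : 2 ≤ d) (c : ℤ) (hc : c ≠ 0) (q : ℚ) :
    |ratHeight (q ^ d + (c : ℚ)) - (d : ℝ) * ratHeight q| ≤ Real.log |2 * (c : ℝ)| := by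
  set p : ℤ := q.num with hp
  set n : ℤ := (q.den : ℤ) with hn
  have hn0 : 0 < n := by rw [hn]; exact_mod_cast q.pos
  have hcop : IsCoprime (p ^ d + c * n ^ d) (n ^ d) := by
    have h1 : IsCoprime p n := Int.isCoprime_iff_gcd_eq_one.mpr q.reduced
    have h2 := (h1.pow (m := d) (n := d)).add_mul_left_left c
    rwa [mul_comm (n ^ d) c] at h2
  have hcop' : Nat.Coprime (p ^ d + c * n ^ d).natAbs (n ^ d).natAbs :=
    Int.isCoprime_iff_gcd_eq_one.mp hcop
  have hnd0 : 0 < n ^ d := pow_pos hn0 d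
  have hqeq : q ^ d + (c : ℚ) = ((p ^ d + c * n ^ d : ℤ) : ℚ) / ((n ^ d : ℤ) : ℚ) := by
    have hq : (q : ℚ) = (p : ℚ) / (n : ℚ) := by
      rw [hp, hn]; push_cast; exact (Rat.num_div_den q).symm
    have hnR : (n : ℚ) ≠ 0 := by exact_mod_cast hn0.ne'
    rw [hq]; push_cast; field_simp
    rw [div_pow, add_mul, div_mul_cancel₀ _ (pow_ne_zero d hnR)]
  have hnum : (q ^ d + (c : ℚ)).num = p ^ d + c * n ^ d := by
    rw [hqeq]; exact Rat.num_div_eq_of_coprime hnd0 hcop'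
  have hden : ((q ^ d + (c : ℚ)).den : ℤ) = n ^ d := by
    rw [hqeq]; exact Rat.den_div_eq_of_coprime hnd0 hcop'
  -- real quantities
  set A : ℝ := |(p : ℝ)| with hA
  set B : ℝ := (q.den : ℝ) with hB
  set M : ℝ := max A B with hM
  set cc : ℝ := |(c : ℝ)| with hcc
  set N : ℝ := |(p : ℝ) ^ d + (c : ℝ) * B ^ d| with hN
  have hB1 : (1 : ℝ) ≤ B := by rw [hB]; exact_mod_cast q.pos
  have hA0 : 0 ≤ A := abs_nonneg _
  have hB0 : (0 : ℝ) ≤ B := le_trans zero_le_one hB1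
  have hcc1 : (1 : ℝ) ≤ cc := by
    rw [hcc]
    have : (1 : ℤ) ≤ |c| := Int.one_le_abs hc
    calc (1 : ℝ) ≤ (|c| : ℤ) := by exact_mod_cast this
    _ = |(c : ℝ)| := by push_cast; ring
  have hM1 : (1 : ℝ) ≤ M := le_trans hB1 (le_max_right _ _)
  have hM0 : (0 : ℝ) ≤ M := le_trans zero_le_one hM1
  have hAM : A ^ d ≤ M ^ d := pow_le_pow_left₀ hA0 (le_max_left _ _) d
  have hBM : B ^ d ≤ M ^ d := pow_le_pow_left₀ hB0 (le_max_right _ _) d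
  have hBd1 : (1 : ℝ) ≤ B ^ d := one_le_pow₀ hB1
  have hmax1 : (1 : ℝ) ≤ max N (B ^ d) := le_trans hBd1 (le_max_right _ _)
  -- upper bound for max N (B^d)
  have hNle : N ≤ A ^ d + cc * B ^ d := by
    calc N ≤ |(p : ℝ) ^ d| + |(c : ℝ) * B ^ d| := abs_add_le _ _
    _ = A ^ d + cc * B ^ d := by
        rw [abs_mul, abs_pow, abs_of_nonneg (pow_nonneg hB0 d)]
  have hub : max N (B ^ d) ≤ (2 * cc) * M ^ d := by
    apply max_le
    · calc N ≤ A ^ d + cc * B ^ d := hNle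
      _ ≤ M ^ d + cc * M ^ d := by nlinarith [pow_nonneg hM0 d]
      _ ≤ (2 * cc) * M ^ d := by nlinarith [pow_nonneg hM0 d]
    · nlinarith [pow_nonneg hM0 d]
  -- lower bound
  have hlb : M ^ d ≤ (2 * cc) * max N (B ^ d) := by
    have hAd : A ^ d ≤ N + cc * B ^ d := by
      have : A ^ d = |((p : ℝ) ^ d + (c : ℝ) * B ^ d) - (c : ℝ) * B ^ d| := by
        rw [hA, ← abs_pow]; ring_nf
      rw [this]
      calc |((p : ℝ) ^ d + (c : ℝ) * B ^ d) - (c : ℝ) * B ^ d|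
          ≤ N + |(c : ℝ) * B ^ d| := abs_sub _ _
      _ = N + cc * B ^ d := by
          rw [abs_mul, abs_pow, abs_of_nonneg hB0]
    have h1 : N ≤ max N (B ^ d) := le_max_left _ _
    have h2 : B ^ d ≤ max N (B ^ d) := le_max_right _ _
    rcases le_total A B with h | h
    · have : M = B := max_eq_right h
      rw [this]
      nlinarith [le_trans hBd1 h2]
    · have : M = A := max_eq_left h
      rw [this]
      nlinarith [le_trans hBd1 h2]
  -- translate heights
  have h2cc : |2 * (c : ℝ)| = 2 * cc := by rw [abs_mul, abs_two]
  have hHq : ratHeight q = Real.log M := by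
    rw [ratHeight, hM, hA, hB]
  have hHφ : ratHeight (q ^ d + (c : ℚ)) = Real.log (max N (B ^ d)) := by
    rw [ratHeight, hnum]
    congr 1
    have hd' : ((q ^ d + (c : ℚ)).den : ℝ) = B ^ d := by
      have : ((q ^ d + (c : ℚ)).den : ℝ) = ((n : ℝ)) ^ d := by
        exact_mod_cast congrArg (fun x : ℤ => (x : ℝ)) hden
      rw [this, hB, hn]; push_cast; ring
    rw [hd', hN]
    congr 1
    push_cast [hB, hn]
    ring_nf
  have h2cc0 : (0 : ℝ) < 2 * cc := by linarith
  have hmaxpos : (0 : ℝ) < max N (B ^ d) := lt_of_lt_of_le one_pos hmax1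
  have hMpos : (0 : ℝ) < M := lt_of_lt_of_le one_pos hM1
  rw [hHφ, hHq, h2cc, abs_sub_le_iff]
  constructor
  · have := Real.log_le_log hmaxpos hub
    rw [Real.log_mul h2cc0.ne' (pow_pos hMpos d).ne', Real.log_pow] at this
    linarith
  · have := Real.log_le_log (pow_pos hMpos d) hlb
    rw [Real.log_mul h2cc0.ne' hmaxpos.ne', Real.log_pow] at this
    linarith

theorem canonical_height_minus_height_bound (d : ℕ) (hd : 2 ≤ d) (c : ℤ) (hc : c ≠ 0)
    (α : ℚ) :
    ∃ L : ℝ,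
      Tendsto (fun k : ℕ =>
          ratHeight ((fun z : ℚ => z ^ d + (c : ℚ))^[k] α) / (d : ℝ) ^ k)
        atTop (nhds L) ∧
      |L - ratHeight α| ≤ Real.log |2 * (c : ℝ)| / ((d : ℝ) - 1) := by
  set φ : ℚ → ℚ := fun z => z ^ d + (c : ℚ) with hφ
  set f : ℕ → ℝ := fun k => ratHeight (φ^[k] α) with hf
  set a : ℕ → ℝ := fun k => f k / (d : ℝ) ^ k with ha
  have hd1 : (1 : ℝ) < (d : ℝ) := by exact_mod_cast lt_of_lt_of_le one_lt_two hd
  have hd0 : (0 : ℝ) < (d : ℝ) := lt_trans one_pos hd1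
  set C : ℝ := Real.log |2 * (c : ℝ)| with hC
  have hC0 : 0 ≤ C := by
    apply Real.log_nonneg
    rw [abs_mul, abs_two]
    have : (1 : ℤ) ≤ |c| := Int.one_le_abs hc
    have h1 : (1 : ℝ) ≤ |(c : ℝ)| := by
      calc (1 : ℝ) ≤ (|c| : ℤ) := by exact_mod_cast this
      _ = |(c : ℝ)| := by push_cast; ring
    linarith
  set r : ℝ := (d : ℝ)⁻¹ with hr
  have hr0 : 0 ≤ r := inv_nonneg.mpr hd0.le
  have hr1 : r < 1 := inv_lt_one_of_one_lt₀ hd1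
  set b : ℕ → ℝ := fun k => a (k + 1) - a k with hb
  set g : ℕ → ℝ := fun k => C * r ^ (k + 1) with hg
  have hstep : ∀ k, |b k| ≤ g k := by
    intro k
    have h1 := ratHeight_step d hd c hc (φ^[k] α)
    have hiter : φ^[k + 1] α = (φ^[k] α) ^ d + (c : ℚ) :=
      Function.iterate_succ_apply' φ k α
    have hfk : f (k + 1) = ratHeight ((φ^[k] α) ^ d + (c : ℚ)) := by
      rw [hf]; simp only [hiter]
    have hpow : (0 : ℝ) < (d : ℝ) ^ (k + 1) := pow_pos hd0 _
    have heq : b k = (f (k + 1) - (d : ℝ) * f k) / (d : ℝ) ^ (k + 1) := by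
      rw [hb, ha]
      field_simp
      ring
    have hgk : g k = C / (d : ℝ) ^ (k + 1) := by
      simp only [hg, hr, inv_pow]
      ring
    rw [heq, abs_div, abs_of_pos hpow, hgk, hfk]
    gcongr
  have hgsum : Summable g := by
    have : Summable (fun k : ℕ => r ^ k) := summable_geometric_of_lt_one hr0 hr1
    have h2 : Summable (fun k : ℕ => (C * r) * r ^ k) := this.mul_left _
    apply h2.congr
    intro k
    rw [hg]
    ring
  have hbsum : Summable b := Summable.of_norm_bounded hgsum (by
    intro k
    rw [Real.norm_eq_abs]
    exact hstep k)
  set S : ℝ := ∑' k, b k with hS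
  refine ⟨a 0 + S, ?_, ?_⟩
  · have h1 : Tendsto (fun n : ℕ => ∑ i ∈ Finset.range n, b i) atTop (nhds S) :=
      hbsum.hasSum.tendsto_sum_nat
    have h2 : Tendsto (fun n : ℕ => a 0 + ∑ i ∈ Finset.range n, b i) atTop (nhds (a 0 + S)) :=
      tendsto_const_nhds.add h1
    have h3 : (fun n : ℕ => a 0 + ∑ i ∈ Finset.range n, b i) = a := by
      funext n
      rw [hb]
      rw [Finset.sum_range_sub a]
      ring
    rw [h3] at h2
    exact h2
  · have ha0 : a 0 = ratHeight α := by
      rw [ha, hf]; simp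
    have habs : |a 0 + S - ratHeight α| = |S| := by rw [ha0]; ring_nf
    rw [habs]
    have hnorm : Summable fun k => ‖b k‖ :=
      Summable.of_nonneg_of_le (fun k => norm_nonneg _)
        (fun k => by rw [Real.norm_eq_abs]; exact hstep k) hgsum
    have h1 : |S| ≤ ∑' k, ‖b k‖ := by
      rw [hS, ← Real.norm_eq_abs]
      exact norm_tsum_le_tsum_norm hnorm
    have h2 : ∑' k, ‖b k‖ ≤ ∑' k, g k := by
      apply Summable.tsum_le_tsum _ hnorm hgsum
      intro k
      rw [Real.norm_eq_abs]
      exact hstep k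
    have h3 : ∑' k, g k = C * r * (1 - r)⁻¹ := by
      have : ∑' k, g k = ∑' k, (C * r) * r ^ k := by
        apply tsum_congr; intro k; rw [hg]; ring
      rw [this, tsum_mul_left, tsum_geometric_of_lt_one hr0 hr1]
    have h4 : C * r * (1 - r)⁻¹ = C / ((d : ℝ) - 1) := by
      have hdne : (d : ℝ) ≠ 0 := hd0.ne'
      have hdm1 : (d : ℝ) - 1 ≠ 0 := by linarith
      have h1r : 1 - r ≠ 0 := by
        have : 0 < 1 - r := by linarith
        exact this.ne'
      rw [hr]
      field_simp
    calc |S| ≤ ∑' k, ‖b k‖ := h1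
    _ ≤ ∑' k, g k := h2
    _ = C * r * (1 - r)⁻¹ := h3
    _ = C / ((d : ℝ) - 1) := h4
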